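/- arXiv:math/0411387 — 2 statements merged into one kernel-verified Lean document; each statement's English description precedes it below -/
import Mathlib

section
/- Let π be a nondecreasing parking function of length n whose distinct letters, in increasing order, have multiplicities m_1, m_2, …, m_r. Let 1^m denote the word of length m with all letters 1. Then the multiset { a * 1^n : a ∈ PF_n, a↑ = π } equals the iterated shifted shuffle 1^{m_1} ⋒ 1^{m_2} ⋒ ⋯ ⋒ 1^{m_r} (as multisets of parking functions of length n). (This is the identity P^π * J_n = J_{m_1} J_{m_2} ⋯ J_{m_r}.) -/
open List

/-- `sortW w` is the nondecreasing rearrangement `w↑` of the word `w`. -/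
def sortW (w : List ℕ) : List ℕ := w.mergeSort (fun a b => decide (a ≤ b))

/-- `a` is a parking function: a word over the positive integers whose
nondecreasing rearrangement `a↑ = a'₁ ⋯ a'ₙ` satisfies `a'ᵢ ≤ i` for all `i`. -/
def IsPF (a : List ℕ) : Prop :=
  (∀ x ∈ a, 1 ≤ x) ∧ ∀ i, i < a.length → (sortW a).getD i 0 ≤ i + 1

/-- `dW w = min { i ≥ 1 : #{j : wⱼ ≤ i} < i }`. -/
noncomputable def dW (w : List ℕ) : ℕ := sInf {i | 1 ≤ i ∧ w.countP (fun x => decide (x ≤ i)) < i}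

/-- Decrement by one every letter strictly greater than `d`. -/
def decAbove (d : ℕ) (w : List ℕ) : List ℕ := w.map (fun x => if d < x then x - 1 else x)

lemma mem_dW_set (w : List ℕ) :
    (w.length + 1) ∈ {i | 1 ≤ i ∧ w.countP (fun x => decide (x ≤ i)) < i} := by
  refine ⟨by omega, ?_⟩
  have := w.countP_le_length (p := fun x => decide (x ≤ w.length + 1))
  omega

lemma decAbove_sum_lt {w : List ℕ} (h : dW w ≠ w.length + 1) :
    (decAbove (dW w) w).sum < w.sum := by
  have hmem : 1 ≤ dW w ∧ w.countP (fun x => decide (x ≤ dW w)) < dW w := Nat.sInf_mem (⟨_, mem_dW_set w⟩ : Set.Nonempty _)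
  have hle : dW w ≤ w.length + 1 := Nat.sInf_le (mem_dW_set w)
  obtain ⟨h1, h2⟩ := hmem
  have hlen : dW w ≤ w.length := by omega
  -- there is a letter strictly greater than `dW w`
  have hx : ∃ x ∈ w, ¬ (x ≤ dW w) := by
    by_contra hc
    push_neg at hc
    have : w.countP (fun x => decide (x ≤ dW w)) = w.length := by
      rw [List.countP_eq_length]
      intro a ha
      simpa using hc a ha
    omega
  obtain ⟨x, hxw, hxd⟩ := hx
  have := List.sum_lt_sum (l := w) (f := fun y => if dW w < y then y - 1 else y) (g := id)
    (fun i _ => by dsimp; split <;> omega)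
    ⟨x, hxw, by dsimp; rw [if_pos (by omega)]; omega⟩
  simpa [decAbove] using this

/-- The parkization `Park(w)` of a word `w` over the positive integers. -/
noncomputable def park (w : List ℕ) : List ℕ :=
  if h : dW w = w.length + 1 then w
  else
    have : (decAbove (dW w) w).sum < w.sum := decAbove_sum_lt h
    park (decAbove (dW w) w)
termination_by w.sum

/-- The standardization `Std(w)`: its `i`-th letter is `#{j : wⱼ ≤ wᵢ}`. -/
def stdW (w : List ℕ) : List ℕ := w.map (fun x => w.countP (fun y => decide (y ≤ x)))

/-- `v[k]`: shift every letter of `v` by `k`. -/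
def shiftW (k : ℕ) (v : List ℕ) : List ℕ := v.map (· + k)

/-- Shifted concatenation `u • v = u · v[k]`, `k = |u|`. -/
def sconc (u v : List ℕ) : List ℕ := u ++ shiftW u.length v

/-- The multiset of all shuffles of two words, counted with multiplicity. -/
def shuffles : List ℕ → List ℕ → Multiset (List ℕ)
  | [], v => {v}
  | x :: u, [] => {x :: u}
  | x :: u, y :: v =>
      (shuffles u (y :: v)).map (fun w => x :: w) + (shuffles (x :: u) v).map (fun w => y :: w)
termination_by u v => u.length + v.length

/-- Shifted shuffle `u ⋒ v`, a multiset of words. -/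
def sshuffle (u v : List ℕ) : Multiset (List ℕ) := shuffles u (shiftW u.length v)

/-- Iterated shifted shuffle `u₁ ⋒ u₂ ⋒ ⋯ ⋒ u_r`. -/
def itersShuffle : List (List ℕ) → Multiset (List ℕ)
  | [] => {[]}
  | u :: rest => (itersShuffle rest).bind (fun v => sshuffle u v)

/-- Lexicographic pair-encoding `a ⊛ b` of two words of length `n` with letters in `[n]`:
the `i`-th letter is `(aᵢ - 1)·n + bᵢ`. -/
def pairEnc (n : ℕ) (a b : List ℕ) : List ℕ := List.zipWith (fun x y => (x - 1) * n + y) a b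

/-- The internal product `a * b := Park(a ⊛ b)` of two parking functions of the same length. -/
noncomputable def iprod (a b : List ℕ) : List ℕ := park (pairEnc a.length a b)

/-- The word `1^m` of length `m` with all letters equal to `1`. -/
def onesW (m : ℕ) : List ℕ := List.replicate m 1

/-- The multiset (without repetition) of all words `a` with `a↑ = π`. -/
def classM (π : List ℕ) : Multiset (List ℕ) :=
  (↑(π.permutations.dedup) : Multiset (List ℕ)).filter (fun a => sortW a = π)

open Classical in
/-- The finite set of all parking functions of length `n`. -/
noncomputable def PFfin (n : ℕ) : Finset (List ℕ) :=
  ((Finset.univ : Finset (Fin n → Fin n)).image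
    (fun f => List.ofFn (fun i => (f i : ℕ) + 1))).filter IsPF

/-- Split a word into consecutive factors of the given lengths. -/
def splitFactors : List ℕ → List ℕ → List (List ℕ)
  | [], _ => []
  | k :: ks, e => e.take k :: splitFactors ks (e.drop k)

/-- Iterated shifted concatenation. -/
def sconcAll : List (List ℕ) → List ℕ
  | [] => []
  | u :: rest => sconc u (sconcAll rest)

/-- Multiset of tuples `(a₁, …, a_r)` (as lists) with `aᵢ↑ = πᵢ`. -/
def tuplesM : List (List ℕ) → Multiset (List (List ℕ))
  | [] => {[]}
  | p :: ps => (classM p).bind (fun a => (tuplesM ps).map (fun A => a :: A))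

/-- `π'` is a successor of `π`: the evaluation of `π'` is obtained from that of `π`
by merging two consecutive (modulo zeros) nonzero entries onto the left one. -/
def IsSuccEv (π π' : List ℕ) : Prop :=
  ∃ i j : ℕ, 1 ≤ i ∧ i < j ∧ π.count i ≠ 0 ∧ π.count j ≠ 0 ∧
    (∀ k, i < k → k < j → π.count k = 0) ∧
    (∀ m, π'.count m = if m = i then π.count i + π.count j else if m = j then 0 else π.count m)

/-- The partial order `π ⪯ π'`: reflexive–transitive closure of the successor relation. -/
def succeq (π π' : List ℕ) : Prop := Relation.ReflTransGen IsSuccEv π π'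


-- ===== auxiliary lemmas =====

def cntlt (w : List ℕ) (x : ℕ) : ℕ := w.countP (fun z => decide (z < x))

def Spread (w : List ℕ) : Prop :=
  (∀ x ∈ w, cntlt w x + 1 ≤ x) ∧ ∀ x ∈ w, ∀ y ∈ w, x ≤ y → x + cntlt w y ≤ y + cntlt w x

lemma countP_le_split (l : List ℕ) (x : ℕ) :
    l.countP (fun z => decide (z ≤ x)) = cntlt l x + l.count x := by
  induction l with
  | nil => simp [cntlt]
  | cons a t ih =>
    rcases Nat.lt_trichotomy a x with h | h | h
    · have h1 : a ≤ x := by omega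
      have h2 : ¬ (x = a) := by omega
      simp [cntlt, List.countP_cons, List.count_cons, h, h1, h2, Ne.symm h2] at *
      omega
    · subst h
      simp [cntlt, List.countP_cons, List.count_cons] at *
      omega
    · have h1 : ¬ (a ≤ x) := by omega
      have h2 : ¬ (a < x) := by omega
      have h3 : ¬ (x = a) := by omega
      simp [cntlt, List.countP_cons, List.count_cons, h1, h2, h3, Ne.symm h3] at *
      omega

lemma cntlt_eq_le_pred (l : List ℕ) (x : ℕ) (hx : 1 ≤ x) :
    cntlt l x = l.countP (fun z => decide (z ≤ x - 1)) := by
  apply List.countP_congr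
  intro a _
  simp only [decide_eq_true_eq]
  omega

lemma cntlt_map (w : List ℕ) (f : ℕ → ℕ) (x : ℕ)
    (h1 : ∀ z ∈ w, z < x → f z < f x) (h2 : ∀ z ∈ w, x ≤ z → f x ≤ f z) :
    cntlt (w.map f) (f x) = cntlt w x := by
  unfold cntlt
  rw [List.countP_map]
  apply List.countP_congr
  intro a ha
  show decide (f a < f x) = true ↔ decide (a < x) = true
  simp only [decide_eq_true_eq]
  constructor
  · intro hfa
    by_contra hax
    exact absurd (h2 a ha (by omega)) (by omega)
  · exact h1 a ha

lemma parkSpread (w : List ℕ) (hs : Spread w) :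
    park w = w.map (fun x => cntlt w x + 1) := by
  by_cases h : dW w = w.length + 1
  · rw [park, dif_pos h]
    have hmin : ∀ i, 1 ≤ i → i ≤ w.length → i ≤ w.countP (fun z => decide (z ≤ i)) := by
      intro i h1 h2
      have : i ∉ {i | 1 ≤ i ∧ w.countP (fun x => decide (x ≤ i)) < i} :=
        Nat.notMem_of_lt_sInf (by omega : i < dW w)
      simp only [Set.mem_setOf_eq, not_and, not_lt] at this
      exact this h1
    have hlet : ∀ x ∈ w, x ≤ w.length := by
      intro x hx
      by_contra hc
      push_neg at hc
      have hlenpos : 1 ≤ w.length := List.length_pos_iff.2 (List.ne_nil_of_mem hx)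
      have h1 := hmin w.length hlenpos le_rfl
      have h4 := w.countP_le_length (p := fun z => decide (z ≤ w.length))
      have h5 : w.countP (fun z => decide (z ≤ w.length)) ≠ w.length := by
        intro he
        have := (List.countP_eq_length).1 he x hx
        simp only [decide_eq_true_eq] at this
        omega
      omega
    have hthis : ∀ x ∈ w, cntlt w x + 1 = x := by
      intro x hx
      have hub := hs.1 x hx
      have hx1 : 1 ≤ x := by omega
      rcases Nat.eq_or_lt_of_le hx1 with h1 | h1
      · omega
      · have := hmin (x-1) (by omega) (by have := hlet x hx; omega)
        rw [cntlt_eq_le_pred w x hx1] at *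
        omega
    conv_lhs => rw [← List.map_id w]
    exact List.map_congr_left fun x hx => (hthis x hx).symm
  · -- recursive case
    have hdmem : 1 ≤ dW w ∧ w.countP (fun x => decide (x ≤ dW w)) < dW w :=
      Nat.sInf_mem (⟨_, mem_dW_set w⟩ : Set.Nonempty _)
    obtain ⟨hd1, hdlt⟩ := hdmem
    set d := dW w with hddef
    have hmin : ∀ i, 1 ≤ i → i < d → i ≤ w.countP (fun z => decide (z ≤ i)) := by
      intro i h1 h2
      have : i ∉ {i | 1 ≤ i ∧ w.countP (fun x => decide (x ≤ i)) < i} :=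
        Nat.notMem_of_lt_sInf h2
      simp only [Set.mem_setOf_eq, not_and, not_lt] at this
      exact this h1
    have hpos : ∀ x ∈ w, 1 ≤ x := fun x hx => le_trans (by omega) (hs.1 x hx)
    have htight : ∀ x ∈ w, x < d → x - 1 ≤ cntlt w x := by
      intro x hx hxd
      have hx1 := hpos x hx
      rcases Nat.eq_or_lt_of_le hx1 with h1 | h1
      · omega
      · have := hmin (x-1) (by omega) (by omega)
        rw [cntlt_eq_le_pred w x hx1]
        omega
    have hnod : d ∉ w := by
      intro hdw
      have h1 : d - 1 ≤ cntlt w d := by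
        rcases Nat.eq_or_lt_of_le hd1 with h1 | h1
        · omega
        · have := hmin (d-1) (by omega) (by omega)
          rw [cntlt_eq_le_pred w d hd1]
          omega
      have h2 : 0 < w.count d := List.count_pos_iff.2 hdw
      have h3 := countP_le_split w d
      omega
    have hkey : ∀ y ∈ w, d < y → cntlt w y + 2 ≤ y := by
      intro y
      induction y using Nat.strong_induction_on with
      | _ y ih =>
        intro hy hdy
        by_cases hmid : ∃ z ∈ w, d < z ∧ z < y
        · obtain ⟨z, hz, hdz, hzy⟩ := hmid
          have h1 := ih z hzy hz hdz
          have h2 := hs.2 z hz y hy (by omega)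
          omega
        · push_neg at hmid
          have hcc : cntlt w y = w.countP (fun z => decide (z ≤ d)) := by
            apply List.countP_congr
            intro a ha
            simp only [decide_eq_true_eq]
            constructor
            · intro hay
              by_contra had
              exact absurd (hmid a ha (by omega)) (by omega)
            · intro had; omega
          omega
    set f : ℕ → ℕ := fun x => if d < x then x - 1 else x with hfdef
    have hfeq : decAbove d w = w.map f := rfl
    have hmono : ∀ u ∈ w, ∀ v ∈ w, u < v → f u < f v := by
      intro u hu v hv huv
      have hu1 := hpos u hu
      have hud : u ≠ d := fun hh => hnod (hh ▸ hu)
      have hvd : v ≠ d := fun hh => hnod (hh ▸ hv)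
      show (if d < u then u - 1 else u) < (if d < v then v - 1 else v)
      split <;> split <;> omega
    have hwk : ∀ u v : ℕ, u ≤ v → f u ≤ f v := by
      intro u v huv
      show (if d < u then u - 1 else u) ≤ (if d < v then v - 1 else v)
      split <;> split <;> omega
    have hcmap : ∀ x ∈ w, cntlt (w.map f) (f x) = cntlt w x := fun x hx =>
      cntlt_map w f x (fun z hz => hmono z hz x hx) (fun z _ hxz => hwk x z hxz)
    rw [park, dif_neg h]
    show park (decAbove d w) = w.map (fun x => cntlt w x + 1)
    have hspread' : Spread (decAbove d w) := by
      rw [hfeq]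
      constructor
      · intro fx hfx
        obtain ⟨x, hx, rfl⟩ := List.mem_map.1 hfx
        rw [hcmap x hx]
        have h1 := hs.1 x hx
        by_cases hdx : d < x
        · have h2 := hkey x hx hdx
          show cntlt w x + 1 ≤ if d < x then x - 1 else x
          rw [if_pos hdx]
          omega
        · show cntlt w x + 1 ≤ if d < x then x - 1 else x
          rw [if_neg hdx]
          omega
      · intro fx hfx fy hfy hfxy
        obtain ⟨x, hx, rfl⟩ := List.mem_map.1 hfx
        obtain ⟨y, hy, rfl⟩ := List.mem_map.1 hfy
        rw [hcmap x hx, hcmap y hy]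
        have hxy : x ≤ y := by
          by_contra hc
          push_neg at hc
          exact absurd hfxy (by exact Nat.not_le.2 (hmono y hy x hx hc))
        have hsp := hs.2 x hx y hy hxy
        have hx1 := hpos x hx
        have hxd : x ≠ d := fun hh => hnod (hh ▸ hx)
        have hyd : y ≠ d := fun hh => hnod (hh ▸ hy)
        show f x + cntlt w y ≤ f y + cntlt w x
        by_cases hdx : d < x <;> by_cases hdy : d < y
        · show (if d < x then x - 1 else x) + cntlt w y ≤ (if d < y then y - 1 else y) + cntlt w x
          rw [if_pos hdx, if_pos hdy]; omega
        · omega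
        · have hk := hkey y hy hdy
          have ht := htight x hx (by omega)
          show (if d < x then x - 1 else x) + cntlt w y ≤ (if d < y then y - 1 else y) + cntlt w x
          rw [if_neg hdx, if_pos hdy]
          omega
        · show (if d < x then x - 1 else x) + cntlt w y ≤ (if d < y then y - 1 else y) + cntlt w x
          rw [if_neg hdx, if_neg hdy]; omega
    have hrec := parkSpread (decAbove d w) hspread'
    rw [hrec, hfeq, List.map_map]
    apply List.map_congr_left
    intro x hx
    show cntlt (w.map f) (f x) + 1 = cntlt w x + 1
    rw [hcmap x hx]
termination_by w.sum
decreasing_by exact decAbove_sum_lt h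

lemma zipWith_replicate_right (f : ℕ → ℕ → ℕ) (c : ℕ) :
    ∀ l : List ℕ, List.zipWith f l (List.replicate l.length c) = l.map (fun x => f x c)
  | [] => rfl
  | a :: t => by
    simp only [List.length_cons, List.replicate_succ, List.zipWith_cons_cons, List.map_cons]
    rw [zipWith_replicate_right f c t]

lemma iprod_ones (a : List ℕ) (hpos : ∀ x ∈ a, 1 ≤ x) :
    iprod a (onesW a.length) = a.map (fun x => cntlt a x + 1) := by
  set n := a.length with hn
  have henc : pairEnc n a (onesW n) = a.map (fun x => (x - 1) * n + 1) := by
    rw [pairEnc, onesW, hn, zipWith_replicate_right]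
  set f : ℕ → ℕ := fun x => (x - 1) * n + 1 with hf
  have hn1 : ∀ x ∈ a, 1 ≤ n := fun x hx => by
    rw [hn]; exact List.length_pos_iff.2 (List.ne_nil_of_mem hx)
  have hmono : ∀ x ∈ a, ∀ z ∈ a, z < x → f z < f x := by
    intro x hx z hz hzx
    show (z - 1) * n + 1 < (x - 1) * n + 1
    have h1 : 1 ≤ n := hn1 x hx
    have h2 : z - 1 + 1 ≤ x - 1 := by
      have := hpos z hz; omega
    calc (z - 1) * n + 1 < (z - 1) * n + n + 1 := by omega
      _ = (z - 1 + 1) * n + 1 := by ring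
      _ ≤ (x - 1) * n + 1 := by
          have := Nat.mul_le_mul_right n h2; omega
  have hwkm : ∀ z x : ℕ, x ≤ z → f x ≤ f z := by
    intro z x hxz
    show (x - 1) * n + 1 ≤ (z - 1) * n + 1
    have := Nat.mul_le_mul_right n (show x - 1 ≤ z - 1 by omega)
    omega
  have hcmap : ∀ x ∈ a, cntlt (a.map f) (f x) = cntlt a x := fun x hx =>
    cntlt_map a f x (fun z hz => hmono x hx z hz) (fun z _ hxz => hwkm z x hxz)
  have hcle : ∀ x, cntlt a x ≤ n := fun x => by
    rw [hn]; exact a.countP_le_length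
  have hsp : Spread (a.map f) := by
    constructor
    · intro fx hfx
      obtain ⟨x, hx, rfl⟩ := List.mem_map.1 hfx
      rw [hcmap x hx]
      show cntlt a x + 1 ≤ (x - 1) * n + 1
      have hx1 := hpos x hx
      rcases Nat.eq_or_lt_of_le hx1 with h1 | h1
      · have : cntlt a x = 0 := by
          rw [cntlt, List.countP_eq_zero]
          intro z hz
          simp only [decide_eq_true_eq]
          have := hpos z hz; omega
        omega
      · have h2 : n ≤ (x - 1) * n := by
          calc n = 1 * n := (one_mul n).symm
            _ ≤ (x - 1) * n := Nat.mul_le_mul_right n (by omega)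
        have := hcle x
        omega
    · intro fx hfx fy hfy hfxy
      obtain ⟨x, hx, rfl⟩ := List.mem_map.1 hfx
      obtain ⟨y, hy, rfl⟩ := List.mem_map.1 hfy
      rw [hcmap x hx, hcmap y hy]
      have hxy : x ≤ y := by
        by_contra hc
        push_neg at hc
        exact absurd hfxy (Nat.not_le.2 (hmono x hx y hy hc))
      rcases Nat.eq_or_lt_of_le hxy with h1 | h1
      · subst h1; omega
      · show (x - 1) * n + 1 + cntlt a y ≤ (y - 1) * n + 1 + cntlt a x
        have hx1 := hpos x hx
        have h2 : (x - 1) * n + n ≤ (y - 1) * n := by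
          have h3 : x - 1 + 1 ≤ y - 1 := by omega
          have := Nat.mul_le_mul_right n h3
          calc (x - 1) * n + n = (x - 1 + 1) * n := by ring
            _ ≤ (y - 1) * n := this
        have := hcle y
        omega
  rw [iprod, ← hn, henc, parkSpread _ hsp, List.map_map]
  apply List.map_congr_left
  intro x hx
  show cntlt (a.map f) (f x) + 1 = cntlt a x + 1
  rw [hcmap x hx]

lemma sortW_perm (w : List ℕ) : (sortW w).Perm w := List.mergeSort_perm w _

lemma sortW_sorted (w : List ℕ) : (sortW w).Pairwise (· ≤ ·) := by
  have := List.pairwise_mergeSort (le := fun a b : ℕ => decide (a ≤ b))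
    (fun a b c h1 h2 => by simp only [decide_eq_true_eq] at *; omega)
    (fun a b => by simp only [Bool.or_eq_true, decide_eq_true_eq]; omega) w
  exact this.imp (by simp only [decide_eq_true_eq]; exact fun h => h)

lemma mem_classM {π : List ℕ} (hs : π.Pairwise (· ≤ ·)) (a : List ℕ) :
    a ∈ classM π ↔ a.Perm π := by
  rw [classM, Multiset.mem_filter, Multiset.mem_coe, List.mem_dedup, List.mem_permutations]
  constructor
  · exact fun h => h.1
  · intro h
    exact ⟨h, List.Perm.eq_of_pairwise' (sortW_sorted a) hs ((sortW_perm a).trans h)⟩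

lemma classM_nodup (π : List ℕ) : (classM π).Nodup :=
  Multiset.Nodup.filter _ (Multiset.coe_nodup.2 (List.nodup_dedup _))

lemma shuffles_mem (u v w : List ℕ) (hu : ∀ x ∈ u, x = 1) (hv : ∀ y ∈ v, y ≠ 1) :
    w ∈ shuffles u v ↔
      w.filter (fun x => decide (x = 1)) = u ∧ w.filter (fun x => !decide (x = 1)) = v := by
  match u, v with
  | [], v =>
    rw [shuffles, Multiset.mem_singleton]
    constructor
    · rintro rfl
      constructor
      · rw [List.filter_eq_nil_iff]
        intro a ha
        simpa using hv a ha
      · rw [List.filter_eq_self]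
        intro a ha
        simpa using hv a ha
    · rintro ⟨h1, h2⟩
      rw [List.filter_eq_nil_iff] at h1
      rw [← h2, List.filter_eq_self.2]
      intro a ha
      simpa using h1 a ha
  | x :: u, [] =>
    rw [shuffles, Multiset.mem_singleton]
    constructor
    · rintro rfl
      constructor
      · rw [List.filter_eq_self]
        intro a ha
        simpa using hu a ha
      · rw [List.filter_eq_nil_iff]
        intro a ha
        simpa using hu a ha
    · rintro ⟨h1, h2⟩
      rw [List.filter_eq_nil_iff] at h2
      rw [← h1, List.filter_eq_self.2]
      intro a ha
      have := h2 a ha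
      simpa using this
  | x :: u, y :: v =>
    have hx1 : x = 1 := hu x (List.mem_cons_self)
    have hy1 : y ≠ 1 := hv y (List.mem_cons_self)
    have hu' : ∀ z ∈ u, z = 1 := fun z hz => hu z (List.mem_cons_of_mem x hz)
    have hv' : ∀ z ∈ v, z ≠ 1 := fun z hz => hv z (List.mem_cons_of_mem y hz)
    rw [shuffles, Multiset.mem_add, Multiset.mem_map, Multiset.mem_map]
    constructor
    · rintro (⟨w', hw', rfl⟩ | ⟨w', hw', rfl⟩)
      · obtain ⟨h1, h2⟩ := (shuffles_mem u (y :: v) w' hu' hv).1 hw'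
        subst hx1
        constructor
        · simp [List.filter_cons, h1]
        · simp [List.filter_cons, h2]
      · obtain ⟨h1, h2⟩ := (shuffles_mem (x :: u) v w' hu hv').1 hw'
        constructor
        · simp [List.filter_cons, hy1, h1]
        · simp [List.filter_cons, hy1, h2]
    · rintro ⟨h1, h2⟩
      match w with
      | [] => simp at h1
      | a :: w' =>
        by_cases ha : a = 1
        · subst ha
          simp only [List.filter_cons, decide_true, if_pos, Bool.not_true, Bool.false_eq_true,
            if_false] at h1 h2
          left
          have hxa : x = 1 := hx1
          refine ⟨w', ?_, by rw [hxa]⟩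
          apply (shuffles_mem u (y :: v) w' hu' hv).2
          refine ⟨?_, h2⟩
          rw [hxa] at h1
          injection h1
        · simp only [List.filter_cons, ha, decide_false, Bool.not_false, if_true, if_false] at h1 h2
          have hay : a = y := by injection h2
          subst hay
          right
          refine ⟨w', ?_, rfl⟩
          apply (shuffles_mem (x :: u) v w' hu hv').2
          exact ⟨h1, by injection h2⟩
termination_by u.length + v.length

lemma shuffles_nodup (u v : List ℕ) (hu : ∀ x ∈ u, x = 1) (hv : ∀ y ∈ v, y ≠ 1) :
    (shuffles u v).Nodup := by
  match u, v with
  | [], v => rw [shuffles]; exact Multiset.nodup_singleton v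
  | x :: u, [] => rw [shuffles]; exact Multiset.nodup_singleton _
  | x :: u, y :: v =>
    have hx1 : x = 1 := hu x (List.mem_cons_self)
    have hy1 : y ≠ 1 := hv y (List.mem_cons_self)
    have hu' : ∀ z ∈ u, z = 1 := fun z hz => hu z (List.mem_cons_of_mem x hz)
    have hv' : ∀ z ∈ v, z ≠ 1 := fun z hz => hv z (List.mem_cons_of_mem y hz)
    rw [shuffles]
    rw [Multiset.nodup_add]
    refine ⟨Multiset.Nodup.map List.cons_injective (shuffles_nodup u (y :: v) hu' hv),
      Multiset.Nodup.map List.cons_injective (shuffles_nodup (x :: u) v hu hv'), ?_⟩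
    rw [Multiset.disjoint_left]
    rintro w hw1 hw2
    obtain ⟨w1, _, rfl⟩ := Multiset.mem_map.1 hw1
    obtain ⟨w2, _, heq⟩ := Multiset.mem_map.1 hw2
    have : y = x := by injection heq
    rw [hx1] at this
    exact hy1 this
termination_by u.length + v.length

lemma perm_map_lift (h : ℕ → ℕ) {L w : List ℕ} (p : L.Perm w) :
    ∀ l : List ℕ, L = l.map h → ∃ a, l.Perm a ∧ w = a.map h := by
  induction p with
  | nil =>
    intro l hl
    have : l = [] := List.map_eq_nil_iff.1 hl.symm
    subst this
    exact ⟨[], List.Perm.refl [], rfl⟩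
  | cons x p ih =>
    intro l hl
    match l with
    | [] => simp at hl
    | b :: l' =>
      simp only [List.map_cons, List.cons.injEq] at hl
      obtain ⟨a1, pa, rfl⟩ := ih l' hl.2
      exact ⟨b :: a1, pa.cons b, by simp [List.map_cons, hl.1]⟩
  | swap x y l0 =>
    intro l hl
    match l with
    | [] => simp at hl
    | [b] => simp at hl
    | b :: c :: l₂ =>
      simp only [List.map_cons, List.cons.injEq] at hl
      refine ⟨c :: b :: l₂, List.Perm.swap c b l₂, ?_⟩
      simp [List.map_cons, hl.1, hl.2.1, hl.2.2]
  | trans p1 p2 ih1 ih2 =>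
    intro l hl
    obtain ⟨a1, q1, hm⟩ := ih1 l hl
    obtain ⟨a2, q2, hm2⟩ := ih2 a1 hm
    exact ⟨a2, q1.trans q2, hm2⟩

lemma map_injOn_strictMono (h : ℕ → ℕ) (S : List ℕ)
    (hm : ∀ x ∈ S, ∀ y ∈ S, x < y → h x < h y) :
    ∀ a b : List ℕ, (∀ x ∈ a, x ∈ S) → (∀ x ∈ b, x ∈ S) → a.map h = b.map h → a = b := by
  intro a
  induction a with
  | nil =>
    intro b _ _ he
    have : b = [] := List.map_eq_nil_iff.1 he.symm
    rw [this]
  | cons x a' ih =>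
    intro b ha hb he
    match b with
    | [] => simp at he
    | y :: b' =>
      simp only [List.map_cons, List.cons.injEq] at he
      have hx : x ∈ S := ha x (List.mem_cons_self)
      have hy : y ∈ S := hb y (List.mem_cons_self)
      have hxy : x = y := by
        rcases Nat.lt_trichotomy x y with hc | hc | hc
        · exact absurd he.1 (Nat.ne_of_lt (hm x hx y hy hc))
        · exact hc
        · exact absurd he.1 (Nat.ne_of_gt (hm y hy x hx hc))
      rw [hxy, ih b' (fun z hz => ha z (List.mem_cons_of_mem x hz))
        (fun z hz => hb z (List.mem_cons_of_mem y hz)) he.2]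

lemma sshuffle_ones (m : ℕ) (v : List ℕ) :
    sshuffle (onesW m) v = shuffles (onesW m) (shiftW m v) := by
  rw [sshuffle, onesW, List.length_replicate]

lemma onesW_all1 {m : ℕ} : ∀ x ∈ onesW m, x = 1 := fun x hx => List.eq_of_mem_replicate hx

lemma shiftW_perm {m : ℕ} {u v : List ℕ} (h : u.Perm v) : (shiftW m u).Perm (shiftW m v) :=
  h.map _

lemma shiftW_ne_one {m : ℕ} (hm : 1 ≤ m) {v : List ℕ} (hv : ∀ x ∈ v, 1 ≤ x) :
    ∀ y ∈ shiftW m v, y ≠ 1 := by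
  intro y hy
  obtain ⟨z, hz, rfl⟩ := List.mem_map.1 hy
  have := hv z hz
  omega

lemma shiftW_unshift (m : ℕ) (l : List ℕ) : (shiftW m l).map (fun x => x - m) = l := by
  rw [shiftW, List.map_map]
  conv_rhs => rw [← List.map_id l]
  apply List.map_congr_left
  intro z _
  simp only [Function.comp_apply, id]
  omega

lemma shuf_step (m : ℕ) (hm : 1 ≤ m) (σ : List ℕ) (hσs : σ.Pairwise (· ≤ ·))
    (hσp : ∀ x ∈ σ, 1 ≤ x) :
    (classM σ).bind (fun v => sshuffle (onesW m) v) = classM (onesW m ++ shiftW m σ) := by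
  have hπ₀s : (onesW m ++ shiftW m σ).Pairwise (· ≤ ·) := by
    rw [List.pairwise_append]
    refine ⟨List.pairwise_replicate.2 (Or.inr le_rfl), ?_, ?_⟩
    · exact List.Pairwise.map _ (fun hab => by omega) hσs
    · intro a ha b hb
      rw [onesW] at ha
      obtain ⟨z, _, rfl⟩ := List.mem_map.1 hb
      have := List.eq_of_mem_replicate ha
      omega
  -- nodup of LHS
  have hnodL : ((classM σ).bind (fun v => sshuffle (onesW m) v)).Nodup := by
    rw [Multiset.nodup_bind]
    constructor
    · intro v hv
      rw [sshuffle_ones]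
      exact shuffles_nodup _ _ onesW_all1
        (shiftW_ne_one hm (fun x hx => hσp x (((mem_classM hσs v).1 hv).mem_iff.1 hx)))
    · rw [classM, Multiset.filter_coe]
      apply (@Multiset.pairwise_coe_iff_pairwise _ _ ⟨fun _ _ h => h.symm⟩ _).2
      have hnd : (σ.permutations.dedup.filter (fun a => decide (sortW a = σ))).Nodup :=
        List.Nodup.filter _ (List.nodup_dedup _)
      apply List.Pairwise.imp_of_mem ?_ hnd
      intro a b ha hb hab
      have haσ : a.Perm σ := by
        rw [List.mem_filter] at ha
        rw [List.mem_dedup, List.mem_permutations] at ha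
        exact ha.1
      have hbσ : b.Perm σ := by
        rw [List.mem_filter] at hb
        rw [List.mem_dedup, List.mem_permutations] at hb
        exact hb.1
      show Disjoint (sshuffle (onesW m) a) (sshuffle (onesW m) b)
      rw [Multiset.disjoint_left]
      intro w hwa hwb
      rw [sshuffle_ones] at hwa hwb
      have h1 := (shuffles_mem _ _ w onesW_all1
        (shiftW_ne_one hm (fun x hx => hσp x (haσ.mem_iff.1 hx)))).1 hwa
      have h2 := (shuffles_mem _ _ w onesW_all1
        (shiftW_ne_one hm (fun x hx => hσp x (hbσ.mem_iff.1 hx)))).1 hwb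
      have : shiftW m a = shiftW m b := h1.2.symm.trans h2.2
      have hab' : a = b := by
        rw [← shiftW_unshift m a, ← shiftW_unshift m b, this]
      exact hab hab'
  refine ((Multiset.Nodup.ext hnodL (classM_nodup _)).2 ?_)
  intro w
  rw [Multiset.mem_bind, mem_classM hπ₀s]
  constructor
  · rintro ⟨v, hv, hw⟩
    have hvσ : v.Perm σ := (mem_classM hσs v).1 hv
    rw [sshuffle_ones] at hw
    obtain ⟨h1, h2⟩ := (shuffles_mem _ _ w onesW_all1
      (shiftW_ne_one hm (fun x hx => hσp x (hvσ.mem_iff.1 hx)))).1 hw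
    calc w.Perm (w.filter (fun x => decide (x = 1)) ++ w.filter (fun x => !decide (x = 1))) :=
      (List.filter_append_perm _ w).symm
    _ = onesW m ++ shiftW m v := by rw [h1, h2]
    _ ~ onesW m ++ shiftW m σ := List.Perm.append_left _ (shiftW_perm hvσ)
  · intro hw
    -- facts about letters of w
    have hwmem : ∀ z ∈ w, z = 1 ∨ m + 1 ≤ z := by
      intro z hz
      have := hw.mem_iff.1 hz
      rcases List.mem_append.1 this with h | h
      · exact Or.inl (List.eq_of_mem_replicate h)
      · obtain ⟨t, ht, rfl⟩ := List.mem_map.1 h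
        have := hσp t ht
        omega
    set wne := w.filter (fun x => !decide (x = 1)) with hwne
    have hwne_ge : ∀ z ∈ wne, m + 1 ≤ z := by
      intro z hz
      rw [hwne, List.mem_filter] at hz
      rcases hwmem z hz.1 with h | h
      · simp [h] at hz
      · exact h
    have hfperm := hw.filter (fun x => !decide (x = 1))
    have hfil_π₀ : (onesW m ++ shiftW m σ).filter (fun x => !decide (x = 1)) = shiftW m σ := by
      rw [List.filter_append]
      rw [List.filter_eq_nil_iff.2 (fun a ha => by simp [List.eq_of_mem_replicate ha])]
      rw [List.filter_eq_self.2 (fun a ha => by simp [shiftW_ne_one hm hσp a ha])]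
      rw [List.nil_append]
    rw [hfil_π₀] at hfperm
    set v := wne.map (fun x => x - m) with hv
    have hshift : shiftW m v = wne := by
      rw [hv, shiftW, List.map_map]
      conv_rhs => rw [← List.map_id wne]
      apply List.map_congr_left
      intro z hz
      have := hwne_ge z hz
      simp only [Function.comp_apply, id]
      omega
    have hvσ : v.Perm σ := by
      have h1 : v.Perm ((shiftW m σ).map (fun x => x - m)) := hfperm.map _
      rw [shiftW_unshift m σ] at h1
      exact h1
    refine ⟨v, (mem_classM hσs v).2 hvσ, ?_⟩
    rw [sshuffle_ones]
    apply (shuffles_mem _ _ w onesW_all1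
      (shiftW_ne_one hm (fun x hx => hσp x (hvσ.mem_iff.1 hx)))).2
    refine ⟨?_, hshift ▸ rfl⟩
    -- w.filter (=1) = onesW m
    have hfp := hw.filter (fun x => decide (x = 1))
    have hfil1 : (onesW m ++ shiftW m σ).filter (fun x => decide (x = 1)) = onesW m := by
      rw [List.filter_append]
      rw [List.filter_eq_self.2 (fun a ha => by simp [List.eq_of_mem_replicate ha])]
      rw [List.filter_eq_nil_iff.2 (fun a ha => by simp [shiftW_ne_one hm hσp a ha])]
      rw [List.append_nil]
    rw [hfil1] at hfp
    rw [onesW, List.eq_replicate_iff]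
    refine ⟨by simpa [onesW] using hfp.length_eq, ?_⟩
    intro b hb
    rw [List.mem_filter] at hb
    simpa using hb.2


lemma countP_mono_of_imp (l : List ℕ) (p q : ℕ → Bool) (h : ∀ a ∈ l, p a = true → q a = true) :
    l.countP p ≤ l.countP q := by
  induction l with
  | nil => simp
  | cons a t ih =>
    rw [List.countP_cons, List.countP_cons]
    have ht := ih (fun z hz => h z (List.mem_cons_of_mem a hz))
    have hpa := h a (List.mem_cons_self)
    cases hpq : p a <;> cases hqq : q a
    · simp only [Bool.false_eq_true, if_false]
      omega
    · simp only [Bool.false_eq_true, if_false, if_true]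
      omega
    · exact absurd (hpa hpq) (by rw [hqq]; simp)
    · simp only [if_true]
      omega

lemma cntlt_mono (l : List ℕ) {x y : ℕ} (hxy : x ≤ y) : cntlt l x ≤ cntlt l y :=
  countP_mono_of_imp l _ _ (fun a _ ha => by
    simp only [decide_eq_true_eq] at *; omega)

lemma cntlt_strict (l : List ℕ) {x y : ℕ} (hx : x ∈ l) (hxy : x < y) :
    cntlt l x < cntlt l y := by
  have h1 : l.countP (fun z => decide (z ≤ x)) ≤ cntlt l y :=
    countP_mono_of_imp l _ _ (fun a _ ha => by simp only [decide_eq_true_eq] at *; omega)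
  have h2 := countP_le_split l x
  have h3 : 0 < l.count x := List.count_pos_iff.2 hx
  omega

lemma gt_of_dropWhile_sorted (l : List ℕ) (v : ℕ) (hs : l.Pairwise (· ≤ ·))
    (hge : ∀ x ∈ l, v ≤ x) : ∀ y ∈ l.dropWhile (fun z => decide (z = v)), v < y := by
  induction l with
  | nil => simp [List.dropWhile]
  | cons a t ih =>
    intro y hy
    rw [List.dropWhile_cons] at hy
    by_cases ha : a = v
    · rw [if_pos (by simp [ha])] at hy
      exact ih ((List.pairwise_cons.1 hs).2) (fun x hx => hge x (List.mem_cons_of_mem a hx)) y hy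
    · rw [if_neg (by simp [ha])] at hy
      have hav : v < a := lt_of_le_of_ne (hge a (List.mem_cons_self)) (Ne.symm ha)
      rcases List.mem_cons.1 hy with rfl | hyt
      · exact hav
      · have := (List.pairwise_cons.1 hs).1 y hyt
        omega

lemma dedup_block (v : ℕ) : ∀ (B ρ : List ℕ), B ≠ [] → (∀ x ∈ B, x = v) → v ∉ ρ →
    (B ++ ρ).dedup = v :: ρ.dedup := by
  intro B
  induction B with
  | nil => intro ρ h; exact absurd rfl h
  | cons x B' ih =>
    intro ρ _ hall hv
    have hx : x = v := hall x (List.mem_cons_self)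
    match B' with
    | [] =>
      subst hx
      exact List.dedup_cons_of_notMem hv
    | y :: B'' =>
      have hy : y = v := hall y (List.mem_cons_of_mem x (List.mem_cons_self))
      have hmem : x ∈ (y :: B'') ++ ρ := by
        rw [hx, ← hy]
        exact List.mem_append_left _ (List.mem_cons_self)
      rw [List.cons_append, List.dedup_cons_of_mem hmem]
      exact ih ρ (List.cons_ne_nil y B'') (fun z hz => hall z (List.mem_cons_of_mem x hz)) hv

lemma classM_nil : classM [] = {[]} := by
  rw [classM, List.permutations_nil]
  rw [List.dedup_cons_of_notMem List.not_mem_nil, List.dedup_nil]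
  rw [show ((↑([[]] : List (List ℕ))) : Multiset (List ℕ)) = {[]} from rfl]
  rw [Multiset.filter_singleton, if_pos (sortW_perm []).eq_nil]

lemma iters_eq : ∀ (N : ℕ) (π : List ℕ), π.length ≤ N → π.Pairwise (· ≤ ·) →
    (∀ x ∈ π, 1 ≤ x) →
    itersShuffle ((π.dedup.map (fun x => π.count x)).map onesW)
      = classM (π.map (fun x => π.countP (fun z => decide (z < x)) + 1)) := by
  intro N
  induction N with
  | zero =>
    intro π hlen _ _
    have : π = [] := List.length_eq_zero_iff.1 (by omega)
    subst this
    rw [show (([] : List ℕ).dedup.map (fun x => List.count x [])).map onesW = [] from rfl]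
    rw [show (List.map (fun x => List.countP (fun z => decide (z < x)) [] + 1) []) = [] from rfl]
    rw [itersShuffle, classM_nil]
  | succ N ih =>
    intro π hlen hs hp
    match π with
    | [] =>
      rw [show (([] : List ℕ).dedup.map (fun x => List.count x [])).map onesW = [] from rfl]
      rw [show (List.map (fun x => List.countP (fun z => decide (z < x)) [] + 1) []) = [] from rfl]
      rw [itersShuffle, classM_nil]
    | v :: t =>
      set π := v :: t with hπ
      have hvmem : v ∈ π := List.mem_cons_self
      have hgev : ∀ x ∈ π, v ≤ x := by
        intro x hx
        rcases List.mem_cons.1 hx with rfl | hxt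
        · exact le_rfl
        · exact (List.pairwise_cons.1 hs).1 x hxt
      set B := π.takeWhile (fun z => decide (z = v)) with hB
      set ρ := π.dropWhile (fun z => decide (z = v)) with hρ
      have hsplit : B ++ ρ = π := List.takeWhile_append_dropWhile
      have hBall : ∀ x ∈ B, x = v := by
        intro x hx
        have := List.mem_takeWhile_imp hx
        simpa using this
      have hρgt : ∀ y ∈ ρ, v < y := gt_of_dropWhile_sorted π v hs hgev
      have hvnρ : v ∉ ρ := fun hc => absurd (hρgt v hc) (lt_irrefl v)
      have hBne : B ≠ [] := by
        rw [hB, hπ, List.takeWhile_cons, if_pos (by simp)]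
        exact List.cons_ne_nil _ _
      set m := B.length with hm
      have hm1 : 1 ≤ m := by
        rw [hm]
        exact List.length_pos_iff.2 hBne
      have hρsub : ∀ x ∈ ρ, x ∈ π := fun x hx => (List.dropWhile_sublist _).subset hx
      have hρs : ρ.Pairwise (· ≤ ·) := List.Pairwise.sublist (List.dropWhile_sublist _) hs
      have hρp : ∀ x ∈ ρ, 1 ≤ x := fun x hx => hp x (hρsub x hx)
      have hρlen : ρ.length ≤ N := by
        have h1 := congrArg List.length hsplit
        rw [List.length_append] at h1
        have h2 : π.length ≤ N + 1 := hlen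
        omega
      have hcountv : π.count v = m := by
        rw [← hsplit, List.count_append,
          List.count_eq_length.2 (fun b hb => (hBall b hb).symm),
          List.count_eq_zero.2 hvnρ]
        omega
      have hdedup : π.dedup = v :: ρ.dedup := by
        rw [← hsplit]
        exact dedup_block v B ρ hBne hBall hvnρ
      have hcnt_agree : ∀ x ∈ ρ.dedup, π.count x = ρ.count x := by
        intro x hx
        rw [List.mem_dedup] at hx
        have hxv : v < x := hρgt x hx
        rw [← hsplit, List.count_append, List.count_eq_zero.2 (fun hc => by
          have := hBall x hc
          omega)]
        omega
      set hf : ℕ → ℕ := fun x => π.countP (fun z => decide (z < x)) + 1 with hhf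
      set hg : ℕ → ℕ := fun x => ρ.countP (fun z => decide (z < x)) + 1 with hhg
      set σ := ρ.map hg with hσ
      have hσs : σ.Pairwise (· ≤ ·) := by
        rw [hσ]
        exact List.Pairwise.map hg (fun a b hab => Nat.add_le_add_right (cntlt_mono ρ hab) 1) hρs
      have hσp : ∀ x ∈ σ, 1 ≤ x := by
        intro x hx
        rw [hσ] at hx
        obtain ⟨y, _, rfl⟩ := List.mem_map.1 hx
        show 1 ≤ ρ.countP (fun z => decide (z < y)) + 1
        omega
      have hmapB : B.map hf = onesW m := by
        rw [onesW, List.eq_replicate_iff]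
        refine ⟨by rw [List.length_map, hm], ?_⟩
        intro b hb
        obtain ⟨x, hx, rfl⟩ := List.mem_map.1 hb
        have hxv : x = v := hBall x hx
        show π.countP (fun z => decide (z < x)) + 1 = 1
        have h0 : π.countP (fun z => decide (z < x)) = 0 := by
          rw [List.countP_eq_zero]
          intro z hz
          simp only [decide_eq_true_eq]
          have := hgev z hz
          omega
        omega
      have hmapρ : ρ.map hf = shiftW m σ := by
        rw [hσ, shiftW, List.map_map]
        apply List.map_congr_left
        intro y hy
        have hvy := hρgt y hy
        show π.countP (fun z => decide (z < y)) + 1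
          = (fun x => x + m) ((fun x => ρ.countP (fun z => decide (z < x)) + 1) y)
        show π.countP (fun z => decide (z < y)) + 1 = (ρ.countP (fun z => decide (z < y)) + 1) + m
        rw [← hsplit, List.countP_append]
        have hBl : B.countP (fun z => decide (z < y)) = B.length :=
          List.countP_eq_length.2 (fun z hz => by
            simp only [decide_eq_true_eq]
            rw [hBall z hz]
            exact hvy)
        omega
      have hmapπ : π.map hf = onesW m ++ shiftW m σ := by
        conv_lhs => rw [← hsplit]
        rw [List.map_append, hmapB, hmapρ]
      rw [hdedup, List.map_cons, List.map_cons, hcountv]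
      rw [List.map_congr_left hcnt_agree]
      rw [itersShuffle]
      rw [ih ρ hρlen hρs hρp]
      rw [shuf_step m hm1 σ hσs hσp]
      rw [← hmapπ]

/-- for a nondecreasing parking function `π` of length `n` whose distinct
letters, in increasing order, have multiplicities `m₁, …, m_r`, the multiset
`{a * 1ⁿ : a↑ = π}` equals the iterated shifted shuffle `1^{m₁} ⋒ ⋯ ⋒ 1^{m_r}`
(this is `P^π * J_n = J_{m₁} ⋯ J_{m_r}`). -/
theorem Ppi_star_Jn (n : ℕ) (pi : List ℕ) (hpi : IsPF pi)
    (hpis : pi.Pairwise (· ≤ ·)) (hlen : pi.length = n) :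
    (classM pi).map (fun a => iprod a (onesW n))
      = itersShuffle ((pi.dedup.map (fun x => pi.count x)).map onesW) := by
  have hpos : ∀ x ∈ pi, 1 ≤ x := hpi.1
  subst hlen
  have step1 : (classM pi).map (fun a => iprod a (onesW pi.length))
      = (classM pi).map (fun a => a.map (fun x => pi.countP (fun z => decide (z < x)) + 1)) := by
    apply Multiset.map_congr rfl
    intro a ha
    have haπ : a.Perm pi := (mem_classM hpis a).1 ha
    have hlen' : a.length = pi.length := haπ.length_eq
    have h1 : iprod a (onesW a.length) = a.map (fun x => cntlt a x + 1) :=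
      iprod_ones a (fun x hx => hpos x (haπ.mem_iff.1 hx))
    rw [← hlen', h1]
    apply List.map_congr_left
    intro x hx
    have h2 : cntlt a x = cntlt pi x := haπ.countP_eq _
    rw [show cntlt a x = a.countP (fun z => decide (z < x)) from rfl] at h2
    rw [show cntlt pi x = pi.countP (fun z => decide (z < x)) from rfl] at h2
    show a.countP (fun z => decide (z < x)) + 1 = pi.countP (fun z => decide (z < x)) + 1
    rw [h2]
  rw [step1, iters_eq pi.length pi le_rfl hpis hpos]
  -- remains : map over classM = classM of mapped word
  set h : ℕ → ℕ := fun x => pi.countP (fun z => decide (z < x)) + 1 with hh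
  have hmono : ∀ x ∈ pi, ∀ y ∈ pi, x < y → h x < h y := by
    intro x hx y hy hxy
    have := cntlt_strict pi hx hxy
    show pi.countP (fun z => decide (z < x)) + 1 < pi.countP (fun z => decide (z < y)) + 1
    exact Nat.add_lt_add_right this 1
  have hsorted' : (pi.map h).Pairwise (· ≤ ·) :=
    List.Pairwise.map h (fun a b hab => Nat.add_le_add_right (cntlt_mono pi hab) 1) hpis
  have hnodL : ((classM pi).map (fun a => a.map h)).Nodup := by
    apply Multiset.Nodup.map_on ?_ (classM_nodup pi)
    intro a ha b hb he
    have haπ : a.Perm pi := (mem_classM hpis a).1 ha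
    have hbπ : b.Perm pi := (mem_classM hpis b).1 hb
    exact map_injOn_strictMono h pi hmono a b (fun x hx => haπ.mem_iff.1 hx)
      (fun x hx => hbπ.mem_iff.1 hx) he
  refine (Multiset.Nodup.ext hnodL (classM_nodup _)).2 ?_
  intro w
  rw [Multiset.mem_map, mem_classM hsorted']
  constructor
  · rintro ⟨a, ha, rfl⟩
    exact ((mem_classM hpis a).1 ha).map h
  · intro hw
    obtain ⟨a, pa, hwa⟩ := perm_map_lift h hw.symm pi rfl
    exact ⟨a, (mem_classM hpis a).2 pa.symm, hwa.symm⟩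
end

section
/- Cocommutativity of CQSym: let π be a nondecreasing parking function of length n, let 0 ≤ j ≤ n, and let σ be a nondecreasing parking function of length j and τ a nondecreasing parking function of length n−j. Then #{ a ∈ PF_n : a↑ = π, Park(a_1⋯a_j)↑ = σ, Park(a_{j+1}⋯a_n)↑ = τ } = #{ a ∈ PF_n : a↑ = π, Park(a_1⋯a_{n−j})↑ = τ, Park(a_{n−j+1}⋯a_n)↑ = σ }. -/
open List

lemma sortW_eq_of_perm {a b : List ℕ} (h : a.Perm b) : sortW a = sortW b := by
  refine List.Perm.eq_of_pairwise' (List.pairwise_mergeSort' (· ≤ ·) a) (List.pairwise_mergeSort' (· ≤ ·) b) ?_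
  exact (List.mergeSort_perm a _).trans (h.trans (List.mergeSort_perm b _).symm)

lemma IsPF_of_perm {a b : List ℕ} (h : a.Perm b) (ha : IsPF a) : IsPF b := by
  obtain ⟨h1, h2⟩ := ha
  refine ⟨fun x hx => h1 x (h.mem_iff.mpr hx), fun i hi => ?_⟩
  rw [← sortW_eq_of_perm h]
  exact h2 i (h.length_eq ▸ hi)

lemma rot_perm (j : ℕ) (a : List ℕ) : (a.drop j ++ a.take j).Perm a := by
  calc (a.drop j ++ a.take j).Perm (a.take j ++ a.drop j) := List.perm_append_comm
    _ = a := List.take_append_drop j a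

lemma len_of_sortW_eq {a pi : List ℕ} (h : sortW a = pi) : a.length = pi.length := by
  rw [← h]; exact (List.mergeSort_perm a _).symm.length_eq

lemma take_app {l₁ l₂ : List ℕ} {k : ℕ} (h : l₁.length = k) : (l₁ ++ l₂).take k = l₁ := by
  subst h; exact List.take_left

lemma drop_app {l₁ l₂ : List ℕ} {k : ℕ} (h : l₁.length = k) : (l₁ ++ l₂).drop k = l₂ := by
  subst h; exact List.drop_left

/-- cocommutativity of CQSym: for a nondecreasing parking function `π`
of length `n`, `0 ≤ j ≤ n`, and nondecreasing parking functions `σ` of length `j` and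
`τ` of length `n - j`:
`#{a : a↑ = π, Park(a₁⋯a_j)↑ = σ, Park(a_{j+1}⋯a_n)↑ = τ}`
`= #{a : a↑ = π, Park(a₁⋯a_{n-j})↑ = τ, Park(a_{n-j+1}⋯a_n)↑ = σ}`. -/
theorem CQSym_cocommutative (n j : ℕ) (hj : j ≤ n) (pi sg ta : List ℕ)
    (hpi : IsPF pi) (hpis : pi.Pairwise (· ≤ ·)) (hlen : pi.length = n)
    (hsg : IsPF sg) (hsgs : sg.Pairwise (· ≤ ·)) (hlsg : sg.length = j)
    (hta : IsPF ta) (htas : ta.Pairwise (· ≤ ·)) (hlta : ta.length = n - j) :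
    {a : List ℕ | IsPF a ∧ sortW a = pi ∧ sortW (park (a.take j)) = sg ∧
        sortW (park (a.drop j)) = ta}.ncard
      = {a : List ℕ | IsPF a ∧ sortW a = pi ∧ sortW (park (a.take (n - j))) = ta ∧
          sortW (park (a.drop (n - j))) = sg}.ncard := by
  
  set S1 := {a : List ℕ | IsPF a ∧ sortW a = pi ∧ sortW (park (a.take j)) = sg ∧
      sortW (park (a.drop j)) = ta} with hS1
  set S2 := {a : List ℕ | IsPF a ∧ sortW a = pi ∧ sortW (park (a.take (n - j))) = ta ∧
      sortW (park (a.drop (n - j))) = sg} with hS2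
  have himg : S2 = (fun a : List ℕ => a.drop j ++ a.take j) '' S1 := by
    ext b
    constructor
    · rintro ⟨hb1, hb2, hb3, hb4⟩
      have hlb : b.length = n := by rw [len_of_sortW_eq hb2, hlen]
      refine ⟨b.drop (n - j) ++ b.take (n - j), ?_, ?_⟩
      · have hl1 : (b.drop (n - j)).length = j := by
          rw [List.length_drop, hlb]; omega
        have ht : (b.drop (n - j) ++ b.take (n - j)).take j = b.drop (n - j) := take_app hl1
        have hd : (b.drop (n - j) ++ b.take (n - j)).drop j = b.take (n - j) := drop_app hl1
        have hperm := rot_perm (n - j) b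
        exact ⟨IsPF_of_perm hperm.symm hb1, (sortW_eq_of_perm hperm).trans hb2,
          by rw [ht]; exact hb4, by rw [hd]; exact hb3⟩
      · have hl1 : (b.drop (n - j)).length = j := by
          rw [List.length_drop, hlb]; omega
        show (b.drop (n - j) ++ b.take (n - j)).drop j ++
            (b.drop (n - j) ++ b.take (n - j)).take j = b
        rw [take_app hl1, drop_app hl1, List.take_append_drop]
    · rintro ⟨a, ⟨ha1, ha2, ha3, ha4⟩, rfl⟩
      have hla : a.length = n := by rw [len_of_sortW_eq ha2, hlen]
      have hl1 : (a.drop j).length = n - j := by rw [List.length_drop, hla]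
      have hperm := rot_perm j a
      exact ⟨IsPF_of_perm hperm.symm ha1, (sortW_eq_of_perm hperm).trans ha2,
        by rw [take_app hl1]; exact ha4, by rw [drop_app hl1]; exact ha3⟩
  have hinj : Set.InjOn (fun a : List ℕ => a.drop j ++ a.take j) S1 := by
    intro a ha b hb hab
    have hla : a.length = n := by rw [len_of_sortW_eq ha.2.1, hlen]
    have hlb : b.length = n := by rw [len_of_sortW_eq hb.2.1, hlen]
    have hl1 : (a.drop j).length = n - j := by rw [List.length_drop, hla]
    have hl2 : (b.drop j).length = n - j := by rw [List.length_drop, hlb]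
    simp only at hab
    have h1 : a.drop j = b.drop j := by
      have := congrArg (List.take (n - j)) hab
      rwa [take_app hl1, take_app hl2] at this
    have h2 : a.take j = b.take j := by
      have := congrArg (List.drop (n - j)) hab
      rwa [drop_app hl1, drop_app hl2] at this
    rw [← List.take_append_drop j a, ← List.take_append_drop j b, h1, h2]
  rw [himg, Set.ncard_image_of_injOn hinj]
end
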